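/- With 3 items and any number of agents with distinct incomes a > b > c > ... such that a ≠ b + c, a competitive equilibrium exists: if a > b + c use the pixep ABA with prices a−c−ε, b, c+ε, and if a < b + c use the pixep ABC with prices a, b, c. Hence CEFAI exists for 3 items. -/

import Mathlib

open Finset

/-- `r A B` means bundle `A` is strictly preferred to bundle `B`.
The preference is transitive, asymmetric, total (strict) and monotone. -/
def StrictMonoPref {m : ℕ} (r : Finset (Fin m) → Finset (Fin m) → Prop) : Prop :=
  (∀ A B C, r A B → r B C → r A C) ∧
  (∀ A B, r A B → ¬ r B A) ∧
  (∀ A B : Finset (Fin m), A ≠ B → r A B ∨ r B A) ∧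
  (∀ A B : Finset (Fin m), A ⊂ B → r B A)

/-- Competitive equilibrium: positive prices, the bundles partition all items,
every agent with a non-empty bundle pays exactly their income, and every agent
either strictly prefers their own bundle to, or cannot afford, any other bundle. -/
def IsCE {m n : ℕ} (t : Fin n → ℝ)
    (pref : Fin n → Finset (Fin m) → Finset (Fin m) → Prop)
    (p : Fin m → ℝ) (X : Fin n → Finset (Fin m)) : Prop :=
  (∀ k, 0 < p k) ∧
  (∀ i j, i ≠ j → Disjoint (X i) (X j)) ∧
  (Finset.univ.biUnion X = Finset.univ) ∧
  (∀ i, X i ≠ ∅ → ∑ k ∈ X i, p k = t i) ∧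
  (∀ i (Y : Finset (Fin m)), Y ≠ X i → pref i (X i) Y ∨ t i < ∑ k ∈ Y, p k)

lemma enum3 : ∀ (u v w : Fin 3), u ≠ v → u ≠ w → v ≠ w → ∀ Y : Finset (Fin 3),
    Y = ∅ ∨ Y = {u} ∨ Y = {v} ∨ Y = {w} ∨ Y = {u,v} ∨ Y = {u,w} ∨ Y = {v,w} ∨ Y = {u,v,w} := by
  decide
lemma ssubE1 : ∀ a : Fin 3, (∅ : Finset (Fin 3)) ⊂ {a} := by decide
lemma ssubE2 : ∀ a b : Fin 3, a ≠ b → (∅ : Finset (Fin 3)) ⊂ {a,b} := by decide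
lemma ssubL : ∀ a b : Fin 3, a ≠ b → ({a} : Finset (Fin 3)) ⊂ {a,b} := by decide
lemma ssubR : ∀ a b : Fin 3, a ≠ b → ({b} : Finset (Fin 3)) ⊂ {a,b} := by decide
lemma cover3 : ∀ u v w : Fin 3, u ≠ v → u ≠ w → v ≠ w → ∀ x : Fin 3, x = u ∨ x = v ∨ x = w := by decide

lemma CE_case1 (n : ℕ) (t : Fin (n + 3) → ℝ)
    (hpos : ∀ i, 0 < t i)
    (hab : t 0 > t 1) (hbc : t 1 > t 2)
    (hrest : ∀ i, i ≠ 0 → i ≠ 1 → i ≠ 2 → t i < t 2)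
    (hlt : t 0 < t 1 + t 2)
    (pref : Fin (n + 3) → Finset (Fin 3) → Finset (Fin 3) → Prop)
    (hpref : ∀ i, StrictMonoPref (pref i))
    (u v w : Fin 3) (huv : u ≠ v) (huw : u ≠ w) (hvw : v ≠ w)
    (h0v : pref 0 {u} {v}) (h0w : pref 0 {u} {w}) (h1w : pref 1 {v} {w}) :
    ∃ (p : Fin 3 → ℝ) (X : Fin (n + 3) → Finset (Fin 3)), IsCE t pref p X := by
  classical
  have h01 : (0 : Fin (n+3)) ≠ 1 := by simp [Fin.ext_iff]
  have h02 : (0 : Fin (n+3)) ≠ 2 := by simp [Fin.ext_iff, Nat.mod_eq_of_lt (show 2 < n + 3 by omega)]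
  have h12 : (1 : Fin (n+3)) ≠ 2 := by simp [Fin.ext_iff, Nat.mod_eq_of_lt (show 2 < n + 3 by omega)]
  set p : Fin 3 → ℝ := fun k => if k = u then t 0 else if k = v then t 1 else t 2 with hp
  set X : Fin (n+3) → Finset (Fin 3) :=
    fun i => if i = 0 then {u} else if i = 1 then {v} else if i = 2 then {w} else ∅ with hXdef
  have hpu : p u = t 0 := by simp [hp]
  have hpv : p v = t 1 := by simp [hp, Ne.symm huv]
  have hpw : p w = t 2 := by simp [hp, Ne.symm huw, Ne.symm hvw]
  have su : ∑ k ∈ ({u} : Finset (Fin 3)), p k = t 0 := by simp [hpu]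
  have sv : ∑ k ∈ ({v} : Finset (Fin 3)), p k = t 1 := by simp [hpv]
  have sw : ∑ k ∈ ({w} : Finset (Fin 3)), p k = t 2 := by simp [hpw]
  have suv : ∑ k ∈ ({u,v} : Finset (Fin 3)), p k = t 0 + t 1 := by
    rw [Finset.sum_pair huv, hpu, hpv]
  have suw : ∑ k ∈ ({u,w} : Finset (Fin 3)), p k = t 0 + t 2 := by
    rw [Finset.sum_pair huw, hpu, hpw]
  have svw : ∑ k ∈ ({v,w} : Finset (Fin 3)), p k = t 1 + t 2 := by
    rw [Finset.sum_pair hvw, hpv, hpw]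
  have suvw : ∑ k ∈ ({u,v,w} : Finset (Fin 3)), p k = t 0 + t 1 + t 2 := by
    rw [show ({u,v,w} : Finset (Fin 3)) = insert u {v,w} from rfl,
      Finset.sum_insert (by simp [huv, huw]), Finset.sum_pair hvw, hpu, hpv, hpw]; ring
  have hX0 : X 0 = {u} := by simp [hXdef]
  have hX1 : X 1 = {v} := by simp [hXdef, Ne.symm h01]
  have hX2 : X 2 = {w} := by simp [hXdef, Ne.symm h02, Ne.symm h12]
  have key : ∀ i : Fin (n+3), (i ≠ 0 ∧ i ≠ 1 ∧ i ≠ 2 ∧ X i = ∅) ∨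
      (i = 0 ∧ X i = {u}) ∨ (i = 1 ∧ X i = {v}) ∨ (i = 2 ∧ X i = {w}) := by
    intro i
    by_cases hi0 : i = 0
    · exact Or.inr (Or.inl ⟨hi0, by simp [hXdef, hi0]⟩)
    by_cases hi1 : i = 1
    · exact Or.inr (Or.inr (Or.inl ⟨hi1, by simp [hXdef, hi1, Ne.symm h01]⟩))
    by_cases hi2 : i = 2
    · exact Or.inr (Or.inr (Or.inr ⟨hi2, by simp [hXdef, hi2, Ne.symm h02, Ne.symm h12]⟩))
    · exact Or.inl ⟨hi0, hi1, hi2, by simp [hXdef, hi0, hi1, hi2]⟩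
  have mono := fun i => (hpref i).2.2.2
  have trans := fun i => (hpref i).1
  refine ⟨p, X, ?_, ?_, ?_, ?_, ?_⟩
  · intro k
    rcases cover3 u v w huv huw hvw k with rfl | rfl | rfl
    · rw [hpu]; exact hpos 0
    · rw [hpv]; exact hpos 1
    · rw [hpw]; exact hpos 2
  · intro i j hij
    rcases key i with ⟨_,_,_,hXi⟩ | ⟨hi, hXi⟩ | ⟨hi, hXi⟩ | ⟨hi, hXi⟩ <;>
      rcases key j with ⟨_,_,_,hXj⟩ | ⟨hj, hXj⟩ | ⟨hj, hXj⟩ | ⟨hj, hXj⟩ <;>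
      simp_all [Finset.disjoint_singleton, huv, huw, hvw, Ne.symm huv, Ne.symm huw, Ne.symm hvw]
  · apply Finset.eq_univ_iff_forall.mpr
    intro x
    rw [Finset.mem_biUnion]
    rcases cover3 u v w huv huw hvw x with rfl | rfl | rfl
    · exact ⟨0, Finset.mem_univ _, by rw [hX0]; exact Finset.mem_singleton_self _⟩
    · exact ⟨1, Finset.mem_univ _, by rw [hX1]; exact Finset.mem_singleton_self _⟩
    · exact ⟨2, Finset.mem_univ _, by rw [hX2]; exact Finset.mem_singleton_self _⟩
  · intro i hi
    rcases key i with ⟨_,_,_,hXi⟩ | ⟨hi', hXi⟩ | ⟨hi', hXi⟩ | ⟨hi', hXi⟩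
    · exact absurd hXi hi
    all_goals subst hi'; rw [hXi]
    · exact su
    · exact sv
    · exact sw
  · intro i Y hY
    rcases key i with ⟨hi0, hi1, hi2, hXi⟩ | ⟨hi', hXi⟩ | ⟨hi', hXi⟩ | ⟨hi', hXi⟩
    · -- empty agents
      have hti : t i < t 2 := hrest i hi0 hi1 hi2
      right
      rcases enum3 u v w huv huw hvw Y with rfl | rfl | rfl | rfl | rfl | rfl | rfl | rfl
      · exact absurd hXi.symm hY
      · rw [su]; linarith
      · rw [sv]; linarith
      · rw [sw]; linarith
      · rw [suv]; linarith [hpos 0, hpos 1]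
      · rw [suw]; linarith [hpos 0, hpos 2]
      · rw [svw]; linarith [hpos 1, hpos 2]
      · rw [suvw]; linarith [hpos 0, hpos 1, hpos 2]
    · -- agent 0
      subst hi'; rw [hXi]; rw [hXi] at hY
      rcases enum3 u v w huv huw hvw Y with rfl | rfl | rfl | rfl | rfl | rfl | rfl | rfl
      · exact Or.inl (mono 0 _ _ (ssubE1 u))
      · exact absurd rfl hY
      · exact Or.inl h0v
      · exact Or.inl h0w
      · right; rw [suv]; linarith [hpos 1]
      · right; rw [suw]; linarith [hpos 2]
      · right; rw [svw]; linarith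
      · right; rw [suvw]; linarith [hpos 1, hpos 2]
    · -- agent 1
      subst hi'; rw [hXi]; rw [hXi] at hY
      rcases enum3 u v w huv huw hvw Y with rfl | rfl | rfl | rfl | rfl | rfl | rfl | rfl
      · exact Or.inl (mono 1 _ _ (ssubE1 v))
      · right; rw [su]; linarith
      · exact absurd rfl hY
      · exact Or.inl h1w
      · right; rw [suv]; linarith [hpos 1]
      · right; rw [suw]; linarith [hpos 2]
      · right; rw [svw]; linarith [hpos 2]
      · right; rw [suvw]; linarith [hpos 0, hpos 2]
    · -- agent 2
      subst hi'; rw [hXi]; rw [hXi] at hY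
      rcases enum3 u v w huv huw hvw Y with rfl | rfl | rfl | rfl | rfl | rfl | rfl | rfl
      · exact Or.inl (mono 2 _ _ (ssubE1 w))
      · right; rw [su]; linarith
      · right; rw [sv]; linarith
      · exact absurd rfl hY
      · right; rw [suv]; linarith
      · right; rw [suw]; linarith [hpos 0]
      · right; rw [svw]; linarith [hpos 1]
      · right; rw [suvw]; linarith [hpos 0, hpos 1]

set_option maxHeartbeats 1000000 in
lemma CE_case2 (n : ℕ) (t : Fin (n + 3) → ℝ)
    (hpos : ∀ i, 0 < t i)
    (hab : t 0 > t 1) (hbc : t 1 > t 2)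
    (hrest : ∀ i, i ≠ 0 → i ≠ 1 → i ≠ 2 → t i < t 2)
    (hgt : t 0 > t 1 + t 2)
    (pref : Fin (n + 3) → Finset (Fin 3) → Finset (Fin 3) → Prop)
    (hpref : ∀ i, StrictMonoPref (pref i))
    (u v w : Fin 3) (huv : u ≠ v) (huw : u ≠ w) (hvw : v ≠ w)
    (h0 : pref 0 {u,w} {v,w}) (h1 : pref 1 {v} {w}) :
    ∃ (p : Fin 3 → ℝ) (X : Fin (n + 3) → Finset (Fin 3)), IsCE t pref p X := by
  classical
  have h01 : (0 : Fin (n+3)) ≠ 1 := by simp [Fin.ext_iff]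
  have h02 : (0 : Fin (n+3)) ≠ 2 := by simp [Fin.ext_iff, Nat.mod_eq_of_lt (show 2 < n + 3 by omega)]
  have h12 : (1 : Fin (n+3)) ≠ 2 := by simp [Fin.ext_iff, Nat.mod_eq_of_lt (show 2 < n + 3 by omega)]
  set ε : ℝ := min (t 1 - t 2) (t 0 - t 1 - t 2) / 2 with hεdef
  have hεmin : 0 < min (t 1 - t 2) (t 0 - t 1 - t 2) := by
    apply lt_min <;> linarith
  have hε0 : 0 < ε := by positivity
  have hε1 : ε < t 1 - t 2 := by
    have := min_le_left (t 1 - t 2) (t 0 - t 1 - t 2); rw [hεdef]; linarith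
  have hε2 : ε < t 0 - t 1 - t 2 := by
    have := min_le_right (t 1 - t 2) (t 0 - t 1 - t 2); rw [hεdef]; linarith
  set p : Fin 3 → ℝ := fun k => if k = u then t 0 - t 2 - ε else if k = v then t 1 else t 2 + ε
    with hp
  set X : Fin (n+3) → Finset (Fin 3) :=
    fun i => if i = 0 then {u,w} else if i = 1 then {v} else ∅ with hXdef
  have hpu : p u = t 0 - t 2 - ε := by simp [hp]
  have hpv : p v = t 1 := by simp [hp, Ne.symm huv]
  have hpw : p w = t 2 + ε := by simp [hp, Ne.symm huw, Ne.symm hvw]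
  have su : ∑ k ∈ ({u} : Finset (Fin 3)), p k = t 0 - t 2 - ε := by simp [hpu]
  have sv : ∑ k ∈ ({v} : Finset (Fin 3)), p k = t 1 := by simp [hpv]
  have sw : ∑ k ∈ ({w} : Finset (Fin 3)), p k = t 2 + ε := by simp [hpw]
  have suv : ∑ k ∈ ({u,v} : Finset (Fin 3)), p k = t 0 - t 2 - ε + t 1 := by
    rw [Finset.sum_pair huv, hpu, hpv]
  have suw : ∑ k ∈ ({u,w} : Finset (Fin 3)), p k = t 0 := by
    rw [Finset.sum_pair huw, hpu, hpw]; ring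
  have svw : ∑ k ∈ ({v,w} : Finset (Fin 3)), p k = t 1 + t 2 + ε := by
    rw [Finset.sum_pair hvw, hpv, hpw]; ring
  have suvw : ∑ k ∈ ({u,v,w} : Finset (Fin 3)), p k = t 0 + t 1 := by
    rw [show ({u,v,w} : Finset (Fin 3)) = insert u {v,w} from rfl,
      Finset.sum_insert (by simp [huv, huw]), Finset.sum_pair hvw, hpu, hpv, hpw]; ring
  have hX0 : X 0 = {u,w} := by simp [hXdef]
  have hX1 : X 1 = {v} := by simp [hXdef, Ne.symm h01]
  have key : ∀ i : Fin (n+3), (i ≠ 0 ∧ i ≠ 1 ∧ t i ≤ t 2 ∧ X i = ∅) ∨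
      (i = 0 ∧ X i = {u,w}) ∨ (i = 1 ∧ X i = {v}) := by
    intro i
    by_cases hi0 : i = 0
    · exact Or.inr (Or.inl ⟨hi0, by simp [hXdef, hi0]⟩)
    by_cases hi1 : i = 1
    · exact Or.inr (Or.inr ⟨hi1, by simp [hXdef, hi1, Ne.symm h01]⟩)
    by_cases hi2 : i = 2
    · exact Or.inl ⟨hi0, hi1, le_of_eq (by rw [hi2]), by simp [hXdef, hi2, Ne.symm h02, Ne.symm h12]⟩
    · exact Or.inl ⟨hi0, hi1, le_of_lt (hrest i hi0 hi1 hi2), by simp [hXdef, hi0, hi1]⟩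
  have mono := fun i => (hpref i).2.2.2
  have trans := fun i => (hpref i).1
  -- pref 0 {u,w} {v} via {v} ⊂ {v,w}
  have h0v : pref 0 {u,w} {v} := trans 0 _ _ _ h0 (mono 0 _ _ (ssubL v w hvw))
  refine ⟨p, X, ?_, ?_, ?_, ?_, ?_⟩
  · intro k
    rcases cover3 u v w huv huw hvw k with rfl | rfl | rfl
    · rw [hpu]; linarith
    · rw [hpv]; exact hpos 1
    · rw [hpw]; linarith [hpos 2]
  · intro i j hij
    rcases key i with ⟨_,_,_,hXi⟩ | ⟨hi, hXi⟩ | ⟨hi, hXi⟩ <;>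
      rcases key j with ⟨_,_,_,hXj⟩ | ⟨hj, hXj⟩ | ⟨hj, hXj⟩ <;>
      simp_all [Finset.disjoint_left, huv, huw, hvw, Ne.symm huv, Ne.symm huw, Ne.symm hvw]
  · apply Finset.eq_univ_iff_forall.mpr
    intro x
    rw [Finset.mem_biUnion]
    rcases cover3 u v w huv huw hvw x with rfl | rfl | rfl
    · exact ⟨0, Finset.mem_univ _, by rw [hX0]; simp⟩
    · exact ⟨1, Finset.mem_univ _, by rw [hX1]; simp⟩
    · exact ⟨0, Finset.mem_univ _, by rw [hX0]; simp⟩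
  · intro i hi
    rcases key i with ⟨_,_,_,hXi⟩ | ⟨hi', hXi⟩ | ⟨hi', hXi⟩
    · exact absurd hXi hi
    · subst hi'; rw [hXi]; exact suw
    · subst hi'; rw [hXi]; exact sv
  · intro i Y hY
    rcases key i with ⟨hi0, hi1, hti, hXi⟩ | ⟨hi', hXi⟩ | ⟨hi', hXi⟩
    · right
      rcases enum3 u v w huv huw hvw Y with rfl | rfl | rfl | rfl | rfl | rfl | rfl | rfl
      · exact absurd hXi.symm hY
      · rw [su]; linarith
      · rw [sv]; linarith
      · rw [sw]; linarith
      · rw [suv]; linarith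
      · rw [suw]; linarith
      · rw [svw]; linarith [hpos 1]
      · rw [suvw]; linarith [hpos 1]
    · -- agent 0, bundle {u,w}
      subst hi'; rw [hXi]; rw [hXi] at hY
      rcases enum3 u v w huv huw hvw Y with rfl | rfl | rfl | rfl | rfl | rfl | rfl | rfl
      · exact Or.inl (mono 0 _ _ (ssubE2 u w huw))
      · exact Or.inl (mono 0 _ _ (ssubL u w huw))
      · exact Or.inl h0v
      · exact Or.inl (mono 0 _ _ (ssubR u w huw))
      · right; rw [suv]; linarith
      · exact absurd rfl hY
      · exact Or.inl h0
      · right; rw [suvw]; linarith [hpos 1]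
    · -- agent 1, bundle {v}
      subst hi'; rw [hXi]; rw [hXi] at hY
      rcases enum3 u v w huv huw hvw Y with rfl | rfl | rfl | rfl | rfl | rfl | rfl | rfl
      · exact Or.inl (mono 1 _ _ (ssubE1 v))
      · right; rw [su]; linarith
      · exact absurd rfl hY
      · exact Or.inl h1
      · right; rw [suv]; linarith
      · right; rw [suw]; linarith
      · right; rw [svw]; linarith [hpos 2]
      · right; rw [suvw]; linarith [hpos 0]

/-- **CEFAI for three items.** With three items and any number of agents having
distinct positive incomes `t 0 > t 1 > t 2 > (all other incomes)` such that
`t 0 ≠ t 1 + t 2`, a competitive equilibrium exists for every profile of strict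
monotone preferences. -/
theorem CEFAI_three_items (n : ℕ) (t : Fin (n + 3) → ℝ)
    (hpos : ∀ i, 0 < t i)
    (hinj : Function.Injective t)
    (hab : t 0 > t 1) (hbc : t 1 > t 2)
    (hrest : ∀ i, i ≠ 0 → i ≠ 1 → i ≠ 2 → t i < t 2)
    (hne : t 0 ≠ t 1 + t 2)
    (pref : Fin (n + 3) → Finset (Fin 3) → Finset (Fin 3) → Prop)
    (hpref : ∀ i, StrictMonoPref (pref i)) :
    ∃ (p : Fin 3 → ℝ) (X : Fin (n + 3) → Finset (Fin 3)), IsCE t pref p X := by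
  have tot0 := (hpref 0).2.2.1
  have tot1 := (hpref 1).2.2.1
  have trans0 := (hpref 0).1
  have trans1 := (hpref 1).1
  rcases lt_or_gt_of_ne hne with hlt | hgt
  · -- case t 0 < t 1 + t 2 : prices a,b,c
    -- find agent 0's best singleton
    rcases tot0 {0} {1} (by decide) with g01 | g10
    · rcases tot0 {0} {2} (by decide) with g02 | g20
      · -- u = 0
        rcases tot1 {1} {2} (by decide) with k | k
        · exact CE_case1 n t hpos hab hbc hrest hlt pref hpref 0 1 2
            (by decide) (by decide) (by decide) g01 g02 k
        · exact CE_case1 n t hpos hab hbc hrest hlt pref hpref 0 2 1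
            (by decide) (by decide) (by decide) g02 g01 k
      · -- u = 2
        have g21 : pref 0 {2} {1} := trans0 _ _ _ g20 g01
        rcases tot1 {0} {1} (by decide) with k | k
        · exact CE_case1 n t hpos hab hbc hrest hlt pref hpref 2 0 1
            (by decide) (by decide) (by decide) g20 g21 k
        · exact CE_case1 n t hpos hab hbc hrest hlt pref hpref 2 1 0
            (by decide) (by decide) (by decide) g21 g20 k
    · rcases tot0 {1} {2} (by decide) with g12 | g21
      · -- u = 1
        rcases tot1 {0} {2} (by decide) with k | k
        · exact CE_case1 n t hpos hab hbc hrest hlt pref hpref 1 0 2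
            (by decide) (by decide) (by decide) g10 g12 k
        · exact CE_case1 n t hpos hab hbc hrest hlt pref hpref 1 2 0
            (by decide) (by decide) (by decide) g12 g10 k
      · -- u = 2
        have g20 : pref 0 {2} {0} := trans0 _ _ _ g21 g10
        rcases tot1 {0} {1} (by decide) with k | k
        · exact CE_case1 n t hpos hab hbc hrest hlt pref hpref 2 0 1
            (by decide) (by decide) (by decide) g20 g21 k
        · exact CE_case1 n t hpos hab hbc hrest hlt pref hpref 2 1 0
            (by decide) (by decide) (by decide) g21 g20 k
  · -- case t 0 > t 1 + t 2 : find agent 1's worst singleton w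
    rcases tot1 {0} {1} (by decide) with g01 | g10
    · rcases tot1 {1} {2} (by decide) with g12 | g21
      · -- w = 2 (pref1 {0}{2}, pref1 {1}{2}); s,t = 0,1
        have g02 : pref 1 {0} {2} := trans1 _ _ _ g01 g12
        rcases tot0 {0,2} {1,2} (by decide) with h | h
        · exact CE_case2 n t hpos hab hbc hrest hgt pref hpref 0 1 2
            (by decide) (by decide) (by decide) h g12
        · exact CE_case2 n t hpos hab hbc hrest hgt pref hpref 1 0 2
            (by decide) (by decide) (by decide) (by
              have : ({1,2} : Finset (Fin 3)) = {2,1} := by decide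
              have : ({0,2} : Finset (Fin 3)) = {2,0} := by decide
              exact h) g02
      · -- w = 1 (pref1 {0}{1}, pref1 {2}{1}); s,t = 0,2
        rcases tot0 {0,1} {2,1} (by decide) with h | h
        · exact CE_case2 n t hpos hab hbc hrest hgt pref hpref 0 2 1
            (by decide) (by decide) (by decide) h g21
        · exact CE_case2 n t hpos hab hbc hrest hgt pref hpref 2 0 1
            (by decide) (by decide) (by decide) h g01
    · rcases tot1 {0} {2} (by decide) with g02 | g20
      · -- w = 2 (pref1 {0}{2}, pref1 {1}{2} by trans); s,t = 0,1
        have g12 : pref 1 {1} {2} := trans1 _ _ _ g10 g02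
        rcases tot0 {0,2} {1,2} (by decide) with h | h
        · exact CE_case2 n t hpos hab hbc hrest hgt pref hpref 0 1 2
            (by decide) (by decide) (by decide) h g12
        · exact CE_case2 n t hpos hab hbc hrest hgt pref hpref 1 0 2
            (by decide) (by decide) (by decide) h g02
      · -- w = 0 (pref1 {1}{0}, pref1 {2}{0}); s,t = 1,2
        rcases tot0 {1,0} {2,0} (by decide) with h | h
        · exact CE_case2 n t hpos hab hbc hrest hgt pref hpref 1 2 0
            (by decide) (by decide) (by decide) h g20
        · exact CE_case2 n t hpos hab hbc hrest hgt pref hpref 2 1 0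
            (by decide) (by decide) (by decide) h g10
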